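/- Let α > 1 be a real number and define f_α(n) = α^((log n)^(3/2)) for natural numbers n ≥ 1 (with f_α(0) = 0, say, where log is the natural logarithm). Then f_α is not strongly-super-polynomial: there is no unbounded t ∈ 𝓕 and positive integers K, M, N such that n²·f_α(n)·t(n) ≤ K·f_α(M·n) for all n ≥ N. -/

import Mathlib

lemma rpow_three_halves {x : ℝ} (hx : 0 ≤ x) : x ^ ((3:ℝ)/2) = x * Real.sqrt x := by
  rw [show (3:ℝ)/2 = 1 + 1/2 by norm_num, Real.rpow_add' hx (by norm_num),
    Real.rpow_one, Real.sqrt_eq_rpow]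

lemma key (lg c L : ℝ) (hlg : 0 < lg) (hc : 0 ≤ c) (h1 : 1 ≤ L) (h2 : c ≤ L)
    (h3 : (3*c*lg/2)^2 ≤ L) :
    (c+L) ^ ((3:ℝ)/2) ≤ L ^ ((3:ℝ)/2) + 2*L/lg := by
  rw [rpow_three_halves (by linarith), rpow_three_halves (by linarith)]
  set a := Real.sqrt (c+L) with ha
  set b := Real.sqrt L with hb
  have ha2 : a^2 = c + L := Real.sq_sqrt (by linarith)
  have hb2 : b^2 = L := Real.sq_sqrt (by linarith)
  have hb1 : 1 ≤ b := by
    rw [hb]; exact Real.one_le_sqrt.2 h1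
  have hab : b ≤ a := Real.sqrt_le_sqrt (by linarith)
  have h3' : 3*c*lg/2 ≤ b := by
    have h0 : 0 ≤ 3*c*lg/2 := by positivity
    nlinarith [hb2]
  have h4 : (a-b)*(2*b) ≤ c := by nlinarith
  have h5 : a^2 ≤ 2*b^2 := by nlinarith
  have hb0 : (0:ℝ) ≤ b := by linarith
  have hab0 : (0:ℝ) ≤ a - b := by linarith
  have e2 : a^2 + a*b + b^2 ≤ 5*b^2 := by nlinarith
  have e3 : a^3 - b^3 ≤ (a-b)*(5*b^2) := by
    have := mul_le_mul_of_nonneg_left e2 hab0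
    nlinarith
  have e5 : (a-b)*(5*b^2) ≤ c * (5*b/2) := by
    have := mul_le_mul_of_nonneg_right h4 (by positivity : (0:ℝ) ≤ 5*b/4)
    nlinarith
  have e6 : lg * (c * (5*b/2)) ≤ 2*b^2 := by nlinarith
  have h6 : (c+L)*a - L*b ≤ 2*L/lg := by
    rw [le_div_iff₀ hlg]
    nlinarith [mul_le_mul_of_nonneg_left e3 hlg.le, mul_le_mul_of_nonneg_left e5 hlg.le]
  linarith

theorem stmt_10 (α : ℝ) (hα : 1 < α) (f : ℕ → ℝ)
    (hf0 : f 0 = 0)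
    (hfdef : ∀ n : ℕ, 1 ≤ n → f n = α ^ ((Real.log n) ^ ((3 : ℝ) / 2))) :
    ¬ ∃ t : ℕ → ℝ, Monotone t ∧ (∀ n, 0 ≤ t n) ∧ (∀ C : ℝ, ∃ n, C < t n) ∧
      ∃ K M N : ℕ, 0 < K ∧ 0 < M ∧ 0 < N ∧
        ∀ n ≥ N, (n : ℝ) ^ 2 * f n * t n ≤ (K : ℝ) * f (M * n) := by
  rintro ⟨t, hmono, ht0, htunb, K, M, N, hK, hM, hN, hbound⟩
  have hα0 : (0:ℝ) < α := by linarith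
  set lg := Real.log α with hlgdef
  have hlg : 0 < lg := Real.log_pos hα
  set c := Real.log M with hcdef
  have hc : 0 ≤ c := Real.log_nonneg (by exact_mod_cast hM)
  set R : ℝ := max (max c ((3*c*lg/2)^2)) 1 with hR
  obtain ⟨n₁, hn₁⟩ := htunb K
  set n : ℕ := max (max N ⌈Real.exp R⌉₊) n₁ with hn
  have hnN : N ≤ n := le_trans (le_max_left _ _) (le_max_left _ _)
  have hn1n : n₁ ≤ n := le_max_right _ _
  have hexpn : Real.exp R ≤ (n:ℝ) := by
    have h1 : (⌈Real.exp R⌉₊ : ℝ) ≤ (n:ℝ) := by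
      exact_mod_cast le_trans (le_max_right N _) (le_max_left _ n₁)
    exact le_trans (Nat.le_ceil _) h1
  have hnpos : (0:ℝ) < n := lt_of_lt_of_le (Real.exp_pos R) hexpn
  have hn1 : 1 ≤ n := by exact_mod_cast Nat.one_le_cast.2 (by exact_mod_cast hnpos)
  set L : ℝ := Real.log n with hL
  have hLR : R ≤ L := (Real.le_log_iff_exp_le hnpos).2 hexpn
  have hL1 : 1 ≤ L := le_trans (le_max_right _ _) hLR
  have hcL : c ≤ L := le_trans (le_trans (le_max_left _ _) (le_max_left _ _)) hLR
  have hBL : (3*c*lg/2)^2 ≤ L := le_trans (le_trans (le_max_right _ _) (le_max_left _ _)) hLR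
  -- f n and f (M*n)
  have hMn1 : 1 ≤ M * n := Nat.one_le_iff_ne_zero.2 (by positivity)
  have hfn : f n = α ^ (L ^ ((3:ℝ)/2)) := hfdef n hn1
  have hfMn : f (M*n) = α ^ ((c + L) ^ ((3:ℝ)/2)) := by
    rw [hfdef (M*n) hMn1]
    congr 2
    rw [Nat.cast_mul, Real.log_mul (by exact_mod_cast hM.ne') (by positivity)]
  -- key bound : f (M*n) ≤ n^2 * f n
  have hkey : (c + L) ^ ((3:ℝ)/2) ≤ L ^ ((3:ℝ)/2) + 2*L/lg := key lg c L hlg hc hL1 hcL hBL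
  have hn2 : (n:ℝ)^2 = α ^ (2*L/lg) := by
    rw [Real.rpow_def_of_pos hα0, ← hlgdef, mul_div_cancel₀ _ hlg.ne', ← Real.exp_log hnpos,
      ← Real.exp_nat_mul]
    norm_num [mul_comm]
    exact hL.symm
  have hfM_le : f (M*n) ≤ (n:ℝ)^2 * f n := by
    rw [hfMn, hfn, hn2, ← Real.rpow_add hα0]
    rw [Real.rpow_le_rpow_left_iff hα]
    linarith
  -- contradiction
  have hfnpos : 0 < f n := by rw [hfn]; positivity
  have hb := hbound n hnN
  have htn : K < t n := lt_of_lt_of_le hn₁ (hmono hn1n)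
  have h2 : (K:ℝ) * f (M*n) ≤ (K:ℝ) * ((n:ℝ)^2 * f n) :=
    mul_le_mul_of_nonneg_left hfM_le (by positivity)
  have h3 : (n:ℝ)^2 * f n * t n ≤ (K:ℝ) * ((n:ℝ)^2 * f n) := le_trans hb h2
  have hpos : 0 < (n:ℝ)^2 * f n := by positivity
  have : t n ≤ (K:ℝ) := by
    have := (mul_le_mul_iff_right₀ hpos).1 (by linarith [h3] : (n:ℝ)^2 * f n * t n ≤ (n:ℝ)^2 * f n * (K:ℝ))
    linarith
  linarith
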